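/- For every σ > 0 there exists a real constant K₀ = K₀(σ) > 0 with the following property: for all real numbers α′ ≠ 0, every real β′ ≥ 2σ and every real K′ ≥ K₀, one has ( |e^{β′·K′} − e^{−i·α′·K′}| / (e^{β′·K′} − 1) )⁶ < 1 + (α′/β′)², where |·| denotes the complex absolute value and e^{−i·α′·K′} is the complex exponential. Equivalently, setting β″ := β′ + i·α′, the sixth power of the ratio is strictly less than (|β″|/β′)². -/

import Mathlib

private lemma abs_sq_aux (E t : ℝ) :
    (‖(E:ℂ) - Complex.exp (-(Complex.I * (t:ℂ)))‖)^2
      = E^2 + 1 - 2 * E * Real.cos t := by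
  have h1 : -(Complex.I * (t:ℂ)) = ((-t : ℝ) : ℂ) * Complex.I := by push_cast; ring
  rw [h1, Complex.sq_norm, Complex.normSq_apply, Complex.exp_mul_I]
  simp [Complex.cos_ofReal_re, Complex.sin_ofReal_re, Real.cos_neg, Real.sin_neg]
  nlinarith [Real.sin_sq_add_cos_sq t]

set_option maxHeartbeats 1000000 in
private lemma key_aux (x E θ s A : ℝ) (hx : (85:ℝ) ≤ x) (hE1 : x + 1 ≤ E)
    (hE2 : 28 * x^2 < E) (hθ2 : θ^2 = s * x^2) (hspos : 0 < s) (hA0 : 0 ≤ A)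
    (hA2 : A^2 = E^2 + 1 - 2 * E * Real.cos θ) :
    (A / (E - 1))^6 < 1 + s := by
  have hE86 : (86:ℝ) ≤ E := by linarith
  have hEpos : (0:ℝ) < E := by linarith
  obtain ⟨D, hDdef⟩ : ∃ D : ℝ, D = E - 1 := ⟨_, rfl⟩
  rw [show E - 1 = D from hDdef.symm]
  have hD : 0 < D := by rw [hDdef]; linarith
  have hD2 : E / 2 ≤ D := by rw [hDdef]; linarith
  have hA2nn : 0 ≤ A^2 := sq_nonneg A
  have hgoal : (A / D)^6 = (A^2)^3 / D^6 := by rw [div_pow]; ring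
  rw [hgoal, div_lt_iff₀ (by positivity)]
  rcases lt_or_ge s 1 with hs1 | hs1
  · -- small s: use cos bound
    have hcos : 1 - θ^2 / 2 ≤ Real.cos θ := Real.one_sub_sq_div_two_le_cos
    have hN : A^2 ≤ D^2 + E * θ^2 := by
      rw [hA2, hDdef]
      nlinarith [mul_nonneg hEpos.le (by linarith : (0:ℝ) ≤ θ^2/2 - (1 - Real.cos θ))]
    obtain ⟨t, htdef⟩ : ∃ t : ℝ, t = s * x^2 * E / D^2 := ⟨_, rfl⟩
    have ht0 : 0 ≤ t := by
      rw [htdef]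
      positivity
    have h7 : 7 * x^2 * E < D^2 := by
      nlinarith [mul_le_mul hD2 hD2 (by linarith) (by linarith)]
    have ht : t < s / 7 := by
      rw [htdef, div_lt_div_iff₀ (by positivity) (by norm_num)]
      nlinarith [mul_lt_mul_of_pos_left h7 hspos]
    have hts : t < 1 := by linarith
    have hN2 : A^2 ≤ D^2 * (1 + t) := by
      have heq : D^2 * (1 + s * x^2 * E / D^2) = D^2 + s * x^2 * E := by
        field_simp
      rw [htdef, heq]
      nlinarith
    have hcube : (1 + t)^3 ≤ 1 + 7 * t := by
      have h1 : t^2 ≤ t := by nlinarith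
      have h2 : t^3 ≤ t^2 := by nlinarith [mul_le_mul_of_nonneg_left h1 ht0]
      rw [show (1+t)^3 = 1+3*t+3*t^2+t^3 from by ring]
      linarith
    calc (A^2)^3 ≤ (D^2 * (1+t))^3 := pow_le_pow_left₀ hA2nn hN2 3
      _ = D^6 * (1+t)^3 := by ring
      _ ≤ D^6 * (1 + 7*t) := mul_le_mul_of_nonneg_left hcube (by positivity)
      _ < D^6 * (1 + s) := mul_lt_mul_of_pos_left (by linarith) (pow_pos hD 6)
      _ = (1 + s) * D^6 := by ring
  · -- large s: crude bound
    have hN : A^2 ≤ (E+1)^2 := by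
      rw [hA2]
      nlinarith [Real.neg_one_le_cos θ]
    have hE112 : E + 1 ≤ 1.12 * D := by rw [hDdef]; linarith
    have h2 : (1.12:ℝ)^6 < 2 := by norm_num
    calc (A^2)^3 ≤ ((E+1)^2)^3 := pow_le_pow_left₀ hA2nn hN 3
      _ = ((E+1)^3)^2 := by ring
      _ ≤ ((1.12 * D)^3)^2 := by
          apply pow_le_pow_left₀ (by positivity)
          exact pow_le_pow_left₀ (by linarith) hE112 3
      _ = 1.12^6 * D^6 := by ring
      _ < 2 * D^6 := mul_lt_mul_of_pos_right h2 (pow_pos hD 6)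
      _ ≤ (1 + s) * D^6 := mul_le_mul_of_nonneg_right (by linarith) (by positivity)

set_option maxHeartbeats 1000000 in
/-- The key modulus-ratio estimate in the proof of the three-circle inequality for
complex indicial roots: for every `σ > 0` there exists `K₀ > 0` such that for all
`α' ≠ 0`, `β' ≥ 2σ` and `K' ≥ K₀`,
`(|e^{β'K'} - e^{-iα'K'}| / (e^{β'K'} - 1))⁶ < 1 + (α'/β')²`. -/
theorem modulus_ratio_estimate :
    ∀ σ : ℝ, 0 < σ → ∃ K₀ : ℝ, 0 < K₀ ∧
      ∀ α' β' K' : ℝ, α' ≠ 0 → 2 * σ ≤ β' → K₀ ≤ K' →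
        (‖((Real.exp (β' * K') : ℂ)
              - Complex.exp (-(Complex.I * (α' : ℂ) * (K' : ℂ))))‖ /
            (Real.exp (β' * K') - 1)) ^ 6
          < 1 + (α' / β') ^ 2 := by
  intro σ hσ
  refine ⟨85 / (2 * σ), by positivity, ?_⟩
  intro α' β' K' hα hβ hK
  have hK0pos : (0:ℝ) < 85 / (2 * σ) := by positivity
  have hKpos : 0 < K' := lt_of_lt_of_le hK0pos hK
  have hβpos : 0 < β' := lt_of_lt_of_le (by linarith) hβ
  have hx : (85:ℝ) ≤ β' * K' := by
    calc (85:ℝ) = 2 * σ * (85 / (2 * σ)) := by field_simp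
    _ ≤ β' * K' := mul_le_mul hβ hK (le_of_lt hK0pos) (le_of_lt hβpos)
  have hE1 : β' * K' + 1 ≤ Real.exp (β' * K') := Real.add_one_le_exp _
  have hx2 : (7225:ℝ) ≤ (β' * K')^2 := by nlinarith
  have hE2 : 28 * (β' * K')^2 < Real.exp (β' * K') := by
    have h4 : β' * K' / 4 + 1 ≤ Real.exp (β' * K' / 4) := Real.add_one_le_exp _
    have hq : (β' * K' / 4 + 1)^4 ≤ Real.exp (β' * K') := by
      have : Real.exp (β' * K') = (Real.exp (β' * K' / 4))^4 := by
        rw [← Real.exp_nat_mul]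
        congr 1
        ring
      rw [this]
      exact pow_le_pow_left₀ (by linarith) h4 4
    nlinarith [sq_nonneg (β' * K'), sq_nonneg ((β' * K')^2 - 7225)]
  have hθ2 : (α' * K')^2 = (α' / β')^2 * (β' * K')^2 := by
    field_simp
  have hsne : α' / β' ≠ 0 := div_ne_zero hα (ne_of_gt hβpos)
  have hspos : 0 < (α' / β')^2 :=
    lt_of_le_of_ne (sq_nonneg _) (Ne.symm (pow_ne_zero 2 hsne))
  have harg : -(Complex.I * (α':ℂ) * (K':ℂ)) = -(Complex.I * ((α' * K' : ℝ):ℂ)) := by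
    push_cast
    ring
  have hA2 := abs_sq_aux (Real.exp (β' * K')) (α' * K')
  rw [← harg] at hA2
  exact key_aux (β' * K') (Real.exp (β' * K')) (α' * K') ((α' / β')^2) _
    hx hE1 hE2 hθ2 hspos (norm_nonneg _) hA2
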